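/- Let G be a finite connected weighted graph with positive edge weights x = (x_e). Endow C^1(G,ℝ) with the inner product in which the dual edge basis is orthogonal with ||e*||² = x_e. If (κ_1,…,κ_{|V|−1}) is any integral basis of the cut group B^1(G,ℤ), then ||κ_1 ∧ … ∧ κ_{|V|−1}||² = Σ_{T spanning tree of G} Π_{e ∈ T} x_e, the Kirchhoff polynomial of G. -/

import Mathlib

/-! Framework: finite graph `(V, E, head, tail)` with `C¹(G,ℤ)` modeled as `E → ℤ`. -/

section Graph

variable {V E : Type*} [Fintype V] [Fintype E] [DecidableEq V] [DecidableEq E]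

/-- The coboundary operator `δ : C⁰(G,ℤ) → C¹(G,ℤ)`; its image is the cut group. -/
def cobd (head tail : E → V) : (V → ℤ) →ₗ[ℤ] (E → ℤ) where
  toFun f := fun e => f (head e) - f (tail e)
  map_add' f g := by funext e; simp; ring
  map_smul' r f := by funext e; simp [mul_sub]

/-- Two vertices are connected through the edges of `T`. -/
def Conn (head tail : E → V) (T : Finset E) (v w : V) : Prop :=
  Relation.ReflTransGen
    (fun a b => ∃ e ∈ T, (head e = a ∧ tail e = b) ∨ (head e = b ∧ tail e = a)) v w

/-- `T` is a spanning tree. -/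
def IsSpanningTree (head tail : E → V) (T : Finset E) : Prop :=
  T.card + 1 = Fintype.card V ∧ ∀ v w : V, Conn head tail T v w

end Graph

open Classical

set_option linter.unusedSectionVars false
set_option maxHeartbeats 1000000

section Aux
variable {V E : Type*} [Fintype V] [Fintype E] [DecidableEq V] [DecidableEq E]
variable {head tail : E → V}
lemma conn_symm {T : Finset E} {v w : V} (h : Conn head tail T v w) :
    Conn head tail T w v := by
  refine (@Relation.ReflTransGen.symmetric _ _ ⟨?_⟩).symm _ _ h
  rintro a b ⟨e, he, h'⟩
  exact ⟨e, he, h'.symm⟩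
lemma conn_step {T : Finset E} {e : E} (he : e ∈ T) :
    Conn head tail T (head e) (tail e) :=
  Relation.ReflTransGen.single ⟨e, he, Or.inl ⟨rfl, rfl⟩⟩
lemma eq_on_conn {α : Type*} {T : Finset E} {f : V → α}
    (hf : ∀ e ∈ T, f (head e) = f (tail e)) {v w : V}
    (h : Conn head tail T v w) : f v = f w := by
  induction h with
  | refl => rfl
  | @tail b c _ hbc ih =>
      obtain ⟨e, he, h'⟩ := hbc
      rcases h' with ⟨h1, h2⟩ | ⟨h1, h2⟩
      · exact ih.trans (h1 ▸ h2 ▸ hf e he)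
      · exact ih.trans (h1 ▸ h2 ▸ (hf e he).symm)
noncomputable def resCobd (head tail : E → V) (T : Finset E) :
    (V → ℚ) →ₗ[ℚ] ({e // e ∈ T} → ℚ) where
  toFun f := fun e => f (head e.1) - f (tail e.1)
  map_add' f g := by funext e; simp; ring
  map_smul' c f := by funext e; simp [mul_sub]

lemma det_eq_zero_of_not_spanning
    (head tail : E → V) {n : ℕ} (hn : n + 1 = Fintype.card V)
    (κ : Fin n → (E → ℤ))
    (hκ_span : Submodule.span ℤ (Set.range κ) = LinearMap.range (cobd head tail))
    (S : Finset E) (hScard : S.card = n)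
    (hS : ¬ IsSpanningTree head tail S)
    (g : Fin n ≃ {e // e ∈ S}) :
    (Matrix.of fun a b : Fin n => κ a ((g b : E))).det = 0 := by
  have hcardC : S.card + 1 = Fintype.card V := by rw [hScard, hn]
  have hnc : ¬ ∀ v w : V, Conn head tail S v w := fun h => hS ⟨hcardC, h⟩
  push_neg at hnc
  obtain ⟨v₀, w₀, hvw⟩ := hnc
  set ψ := resCobd head tail S with hψ
  set one : V → ℚ := fun _ => 1 with hone_def
  set χ : V → ℚ := fun v => if Conn head tail S v₀ v then 1 else 0 with hχ_def
  have hone : one ∈ LinearMap.ker ψ := by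
    rw [LinearMap.mem_ker]; funext e; simp [ψ, resCobd, one]
  have hχ : χ ∈ LinearMap.ker ψ := by
    rw [LinearMap.mem_ker]; funext e
    have hiff : Conn head tail S v₀ (head e.1) ↔ Conn head tail S v₀ (tail e.1) :=
      ⟨fun h => h.trans (conn_step e.2), fun h => h.trans (conn_symm (conn_step e.2))⟩
    simp only [ψ, resCobd, LinearMap.coe_mk, AddHom.coe_mk, χ, Pi.zero_apply]
    rw [if_congr hiff rfl rfl]
    ring
  have hpair : LinearIndependent ℚ ![one, χ] := by
    rw [LinearIndependent.pair_iff]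
    intro s t hst
    have hχw₀ : χ w₀ = 0 := by rw [hχ_def]; exact if_neg hvw
    have hχv₀ : χ v₀ = 1 := by rw [hχ_def]; exact if_pos Relation.ReflTransGen.refl
    have h1 := congrFun hst w₀
    have h2 := congrFun hst v₀
    simp only [Pi.add_apply, Pi.smul_apply, smul_eq_mul, hone_def, Pi.zero_apply,
      hχw₀, hχv₀, mul_one, mul_zero, add_zero] at h1 h2
    refine ⟨h1, ?_⟩
    rw [h1] at h2
    linarith
  have hpair' : LinearIndependent ℚ
      ![(⟨one, hone⟩ : LinearMap.ker ψ), ⟨χ, hχ⟩] := by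
    apply LinearIndependent.of_comp (LinearMap.ker ψ).subtype
    have hcomp : (LinearMap.ker ψ).subtype ∘
        ![(⟨one, hone⟩ : LinearMap.ker ψ), ⟨χ, hχ⟩] = ![one, χ] := by
      funext i; fin_cases i <;> rfl
    rw [hcomp]
    exact hpair
  have hker2 : 2 ≤ Module.finrank ℚ (LinearMap.ker ψ) := by
    simpa using hpair'.fintype_card_le_finrank
  -- reduce to the rational matrix
  have hcast : ((Matrix.of fun a b : Fin n => κ a ((g b : E))).det : ℚ)
      = (Matrix.of fun a b : Fin n => ((κ a ((g b : E)) : ℚ))).det := by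
    have h := RingHom.map_det (Int.castRingHom ℚ)
      (Matrix.of fun a b : Fin n => κ a ((g b : E)))
    simpa [Matrix.map] using h
  by_contra hdet
  have hdetQ : (Matrix.of fun a b : Fin n => ((κ a ((g b : E)) : ℚ))).det ≠ 0 := by
    rw [← hcast]
    exact_mod_cast hdet
  have hunit : IsUnit (Matrix.of fun a b : Fin n => ((κ a ((g b : E)) : ℚ))) :=
    (Matrix.isUnit_iff_isUnit_det _).mpr (isUnit_iff_ne_zero.mpr hdetQ)
  have hrows : LinearIndependent ℚ
      (fun a => (Matrix.of fun a b : Fin n => ((κ a ((g b : E)) : ℚ))) a) :=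
    Matrix.linearIndependent_rows_iff_isUnit.mpr hunit
  -- transport to functions on the subtype
  set ρ : Fin n → ({e // e ∈ S} → ℚ) := fun a => fun e => ((κ a e : ℚ)) with hρ
  have hrowsρ : LinearIndependent ℚ ρ := by
    apply LinearIndependent.of_comp (LinearEquiv.funCongrLeft ℚ ℚ g).toLinearMap
    convert hrows with a
    rfl
  have hρmem : ∀ a, ρ a ∈ LinearMap.range ψ := by
    intro a
    have : κ a ∈ LinearMap.range (cobd head tail) := by
      rw [← hκ_span]
      exact Submodule.subset_span (Set.mem_range_self a)
    obtain ⟨f, hf⟩ := this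
    refine ⟨fun v => ((f v : ℚ)), ?_⟩
    funext e
    have := congrFun hf e.1
    simp only [cobd, LinearMap.coe_mk, AddHom.coe_mk] at this
    simp only [ψ, resCobd, LinearMap.coe_mk, AddHom.coe_mk, ρ]
    rw [← this]
    push_cast
    ring
  set ρ' : Fin n → (LinearMap.range ψ) := fun a => ⟨ρ a, hρmem a⟩ with hρ'
  have hρ'li : LinearIndependent ℚ ρ' := by
    apply LinearIndependent.of_comp (LinearMap.range ψ).subtype
    convert hrowsρ with a
    rfl
  have hrank : n ≤ Module.finrank ℚ (LinearMap.range ψ) := by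
    simpa using hρ'li.fintype_card_le_finrank
  have h2 := LinearMap.finrank_range_add_finrank_ker ψ
  have h4 : Module.finrank ℚ (V → ℚ) = Fintype.card V := by
    simp [Module.finrank_pi]
  omega

lemma card_le_of_conn (head tail : E → V) (T : Finset E)
    (hT : ∀ v w : V, Conn head tail T v w) :
    Fintype.card V ≤ T.card + 1 := by
  rcases isEmpty_or_nonempty V with hV | hV
  · simp [Fintype.card_eq_zero]
  obtain ⟨v₀⟩ := hV
  set ψ := resCobd head tail T with hψ
  have hker : LinearMap.ker ψ ≤ Submodule.span ℚ {(fun _ => 1 : V → ℚ)} := by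
    intro f hf
    have hf' : ∀ e ∈ T, f (head e) = f (tail e) := by
      intro e he
      have := congrFun (LinearMap.mem_ker.mp hf) ⟨e, he⟩
      simpa [ψ, resCobd, sub_eq_zero] using this
    have hconst : f = f v₀ • (fun _ => (1 : ℚ)) := by
      funext w
      have := eq_on_conn hf' (hT v₀ w)
      simp [← this]
    rw [hconst]
    exact Submodule.smul_mem _ _ (Submodule.mem_span_singleton_self _)
  have h1 : Module.finrank ℚ (LinearMap.ker ψ) ≤ 1 := by
    have hne : (fun _ => (1:ℚ) : V → ℚ) ≠ 0 := by
      intro h; exact one_ne_zero (congrFun h v₀)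
    calc Module.finrank ℚ (LinearMap.ker ψ)
        ≤ Module.finrank ℚ (Submodule.span ℚ {(fun _ => 1 : V → ℚ)}) :=
          Submodule.finrank_mono hker
      _ = 1 := finrank_span_singleton hne
  have h2 := LinearMap.finrank_range_add_finrank_ker ψ
  have h3 : Module.finrank ℚ (LinearMap.range ψ) ≤ T.card := by
    have := Submodule.finrank_le (LinearMap.range ψ)
    simpa [Module.finrank_pi, Fintype.card_coe] using this
  have h4 : Module.finrank ℚ (V → ℚ) = Fintype.card V := by
    simp [Module.finrank_pi]
  omega

lemma isUnit_det_of_spanning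
    (head tail : E → V) {n : ℕ} (hn : n + 1 = Fintype.card V)
    (κ : Fin n → (E → ℤ))
    (hκ_indep : LinearIndependent ℤ κ)
    (hκ_span : Submodule.span ℤ (Set.range κ) = LinearMap.range (cobd head tail))
    (S : Finset E) (hS : IsSpanningTree head tail S)
    (g : Fin n ≃ {e // e ∈ S}) :
    IsUnit (Matrix.of fun a b : Fin n => κ a ((g b : E))).det := by
  have hScard : S.card = n := by
    have := hS.1; omega
  set N : Matrix (Fin n) (Fin n) ℤ :=
    Matrix.of (fun b a : Fin n => κ a ((g b : E))) with hN
  set φ := Matrix.toLin' N with hφ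
  have hφ_apply : ∀ (c : Fin n → ℤ) (b : Fin n),
      φ c b = (∑ a, c a • κ a) ((g b : E)) := by
    intro c b
    rw [hφ, Matrix.toLin'_apply]
    simp only [Matrix.mulVec, dotProduct, hN, Matrix.of_apply,
      Finset.sum_apply, Pi.smul_apply, smul_eq_mul]
    exact Finset.sum_congr rfl fun a _ => mul_comm _ _
  -- injectivity
  have hinj : Function.Injective φ := by
    rw [← LinearMap.ker_eq_bot]
    rw [Submodule.eq_bot_iff]
    intro c hc
    rw [LinearMap.mem_ker] at hc
    have hmem : (∑ a, c a • κ a) ∈ LinearMap.range (cobd head tail) := by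
      rw [← hκ_span]
      exact Submodule.sum_mem _ fun a _ =>
        Submodule.smul_mem _ _ (Submodule.subset_span (Set.mem_range_self a))
    obtain ⟨f, hf⟩ := hmem
    have hf' : ∀ e ∈ S, f (head e) = f (tail e) := by
      intro e he
      have hb := congrFun hc (g.symm ⟨e, he⟩)
      rw [hφ_apply] at hb
      simp only [Equiv.apply_symm_apply] at hb
      rw [← hf] at hb
      simpa [cobd, sub_eq_zero] using hb
    have hzero : (∑ a, c a • κ a) = 0 := by
      rw [← hf]
      funext e
      have := eq_on_conn hf' (hS.2 (head e) (tail e))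
      simp [cobd, this]
    have := Fintype.linearIndependent_iff.mp hκ_indep c hzero
    funext a; exact this a
  -- surjectivity
  have hsurj : Function.Surjective φ := by
    rw [← LinearMap.range_eq_top]
    rw [← top_le_iff, ← (Pi.basisFun ℤ (Fin n)).span_eq, Submodule.span_le]
    rintro _ ⟨b₀, rfl⟩
    have hb₀ : (Pi.basisFun ℤ (Fin n)) b₀ = Pi.single b₀ 1 := by
      funext j; simp [Pi.basisFun_apply]
    rw [hb₀]
    set e₀ : E := (g b₀ : E) with he₀def
    have he₀ : e₀ ∈ S := (g b₀).2
    set T : Finset E := S.erase e₀ with hT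
    set U : V → ℤ := fun v => if Conn head tail T (head e₀) v then 1 else 0 with hU
    have htl : ¬ Conn head tail T (head e₀) (tail e₀) := by
      intro hcon
      have hfull : ∀ v w : V, Conn head tail T v w := by
        intro v w
        have hvw := hS.2 v w
        induction hvw with
        | refl => exact Relation.ReflTransGen.refl
        | @tail b c _ hbc ih =>
            obtain ⟨e, he, hor⟩ := hbc
            by_cases heq : e = e₀
            · subst heq
              rcases hor with ⟨h1, h2⟩ | ⟨h1, h2⟩
              · exact ih.trans (h1 ▸ h2 ▸ hcon)
              · exact ih.trans (h1 ▸ h2 ▸ conn_symm hcon)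
            · exact ih.trans
                (Relation.ReflTransGen.single ⟨e, Finset.mem_erase.mpr ⟨heq, he⟩, hor⟩)
      have hcard := card_le_of_conn head tail T hfull
      have hTcard : T.card = S.card - 1 := Finset.card_erase_of_mem he₀
      have hSpos : 1 ≤ S.card := Finset.card_pos.mpr ⟨e₀, he₀⟩
      omega
    have hUrange : cobd head tail U ∈ Submodule.span ℤ (Set.range κ) := by
      rw [hκ_span]; exact LinearMap.mem_range_self _ U
    obtain ⟨c, hc⟩ := (Submodule.mem_span_range_iff_exists_fun ℤ).mp hUrange
    refine ⟨c, ?_⟩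
    funext b
    rw [hφ_apply, hc]
    by_cases hb : b = b₀
    · subst hb
      have h1 : U (head e₀) = 1 := by
        rw [hU]; exact if_pos Relation.ReflTransGen.refl
      have h2 : U (tail e₀) = 0 := by
        rw [hU]; exact if_neg htl
      simp [cobd, ← he₀def, h1, h2, Pi.single_apply]
    · have hne : (g b : E) ≠ e₀ := by
        intro h
        exact hb (g.injective (Subtype.ext (h.trans rfl)))
      have hmemT : (g b : E) ∈ T := Finset.mem_erase.mpr ⟨hne, (g b).2⟩
      have hiff : Conn head tail T (head e₀) (head ((g b : E))) ↔
          Conn head tail T (head e₀) (tail ((g b : E))) :=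
        ⟨fun h => h.trans (conn_step hmemT), fun h => h.trans (conn_symm (conn_step hmemT))⟩
      have : U (head ((g b : E))) = U (tail ((g b : E))) := by
        rw [hU]; simp only; rw [if_congr hiff rfl rfl]
      simp [cobd, this, Pi.single_apply, hb]
  -- conclude
  set eqv := LinearEquiv.ofBijective φ ⟨hinj, hsurj⟩ with heqv
  have hcompid : φ.comp eqv.symm.toLinearMap = LinearMap.id := by
    refine LinearMap.ext fun c => ?_
    show φ (eqv.symm c) = c
    have h1 : φ (eqv.symm c) = eqv (eqv.symm c) :=
      (LinearEquiv.ofBijective_apply _ _).symm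
    rw [h1, eqv.apply_symm_apply]
  have hmul : N * LinearMap.toMatrix' eqv.symm.toLinearMap = 1 := by
    have h1 : LinearMap.toMatrix' (φ.comp eqv.symm.toLinearMap)
        = N * LinearMap.toMatrix' eqv.symm.toLinearMap := by
      rw [LinearMap.toMatrix'_comp, hφ, LinearMap.toMatrix'_toLin']
    rw [← h1, hcompid, LinearMap.toMatrix'_id]
  have hNdet : IsUnit N.det := Matrix.isUnit_det_of_right_inverse hmul
  have hNT : N = Matrix.transpose (Matrix.of fun a b : Fin n => κ a ((g b : E))) := by
    funext a b
    simp [hN, Matrix.transpose_apply]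
  rwa [hNT, Matrix.det_transpose] at hNdet


end Aux

/-- **Squared volume of the cut lattice = Kirchhoff polynomial.**
Endow `C¹(G,ℝ)` with the inner product `⟨α,β⟩ = Σ_e x_e α_e β_e` (so `‖e*‖² = x_e`).
For any integral basis `(κ₁,…,κ_{|V|−1})` of the cut group `B¹(G,ℤ)`, the squared norm
of `κ₁ ∧ … ∧ κ_{|V|−1}` — i.e. the Gram determinant `det(⟨κᵢ,κⱼ⟩)` — equals the
Kirchhoff polynomial `Σ_{T spanning tree} Π_{e∈T} x_e`. -/
theorem cut_basis_gram_det_eq_kirchhoff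
    {V E : Type*} [Fintype V] [Fintype E] [DecidableEq V] [DecidableEq E]
    (head tail : E → V)
    (hconn : ∀ v w : V, Conn head tail (Finset.univ : Finset E) v w)
    (x : E → ℝ) (hx : ∀ e, 0 < x e)
    (n : ℕ) (hn : n + 1 = Fintype.card V)
    (κ : Fin n → (E → ℤ))
    (hκ_indep : LinearIndependent ℤ κ)
    (hκ_span : Submodule.span ℤ (Set.range κ) = LinearMap.range (cobd head tail)) :
    Matrix.det (Matrix.of fun i j : Fin n =>
        ∑ e : E, x e * (κ i e : ℝ) * (κ j e : ℝ)) =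
      ∑ T : Finset E,
        if IsSpanningTree head tail T then ∏ e ∈ T, x e else 0 := by
  classical
  set F : (Fin n → E) → ℝ := fun p =>
    (∏ i, x (p i)) * ((∏ i, (κ i (p i) : ℝ)) *
      (Matrix.of fun a b : Fin n => (κ a (p b) : ℝ)).det) with hF
  -- Step 1: expand the Gram determinant over all maps `p : Fin n → E`.
  have expand :
      (Matrix.of fun i j : Fin n =>
        ∑ e : E, x e * (κ i e : ℝ) * (κ j e : ℝ)).det
      = ∑ p : Fin n → E, F p := by
    rw [Matrix.det_apply']
    have h1 : ∀ σ : Equiv.Perm (Fin n),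
        ((Equiv.Perm.sign σ : ℤ) : ℝ) *
          ∏ i, (Matrix.of fun i j : Fin n =>
            ∑ e : E, x e * (κ i e : ℝ) * (κ j e : ℝ)) (σ i) i
        = ∑ p : Fin n → E, ((Equiv.Perm.sign σ : ℤ) : ℝ) *
            ∏ i, (x (p i) * (κ (σ i) (p i) : ℝ) * (κ i (p i) : ℝ)) := by
      intro σ
      have hprod :
          (∏ i, (Matrix.of fun i j : Fin n =>
            ∑ e : E, x e * (κ i e : ℝ) * (κ j e : ℝ)) (σ i) i)
          = ∑ p ∈ Fintype.piFinset (fun _ : Fin n => (Finset.univ : Finset E)),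
              ∏ i, (x (p i) * (κ (σ i) (p i) : ℝ) * (κ i (p i) : ℝ)) := by
        simp only [Matrix.of_apply]
        rw [Finset.prod_univ_sum]
      rw [hprod, Fintype.piFinset_univ, Finset.mul_sum]
    rw [Finset.sum_congr rfl fun σ _ => h1 σ, Finset.sum_comm]
    refine Finset.sum_congr rfl fun p _ => ?_
    simp only [hF]
    rw [Matrix.det_apply']
    rw [Finset.mul_sum, Finset.mul_sum]
    refine Finset.sum_congr rfl fun σ _ => ?_
    simp only [Matrix.of_apply]
    rw [Finset.prod_mul_distrib, Finset.prod_mul_distrib]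
    ring
  -- Step 2: only injective `p` contribute.
  have hsplit : ∑ p : Fin n → E, F p
      = ∑ p ∈ Finset.univ.filter (fun p : Fin n → E => Function.Injective p), F p := by
    symm
    apply Finset.sum_subset (Finset.filter_subset _ _)
    intro p _ hp
    simp only [Finset.mem_filter, Finset.mem_univ, true_and] at hp
    obtain ⟨a, b, hab, hne⟩ := Function.not_injective_iff.mp hp
    have hdet : (Matrix.of fun a b : Fin n => (κ a (p b) : ℝ)).det = 0 :=
      Matrix.det_zero_of_column_eq hne (fun k => by
        simp only [Matrix.of_apply, hab])
    rw [hF]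
    simp only [hdet, mul_zero]
  -- Step 3: group injective maps by their image.
  have hmaps : ∀ p ∈ Finset.univ.filter (fun p : Fin n → E => Function.Injective p),
      Finset.image p Finset.univ ∈ Finset.powersetCard n (Finset.univ : Finset E) := by
    intro p hp
    simp only [Finset.mem_filter, Finset.mem_univ, true_and] at hp
    rw [Finset.mem_powersetCard_univ, Finset.card_image_of_injective _ hp,
      Finset.card_univ, Fintype.card_fin]
  have hfiber : ∑ p ∈ Finset.univ.filter (fun p : Fin n → E => Function.Injective p), F p
      = ∑ S ∈ Finset.powersetCard n (Finset.univ : Finset E),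
          ∑ p ∈ (Finset.univ.filter (fun p : Fin n → E => Function.Injective p)).filter
            (fun p => Finset.image p Finset.univ = S), F p :=
    (Finset.sum_fiberwise_of_maps_to hmaps F).symm
  -- Step 4: the inner sum over each fiber.
  have hinner : ∀ S ∈ Finset.powersetCard n (Finset.univ : Finset E),
      ∑ p ∈ (Finset.univ.filter (fun p : Fin n → E => Function.Injective p)).filter
        (fun p => Finset.image p Finset.univ = S), F p
      = if IsSpanningTree head tail S then ∏ e ∈ S, x e else 0 := by
    intro S hs
    have hScard : S.card = n := Finset.mem_powersetCard_univ.mp hs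
    have hcardcoe : Fintype.card {e // e ∈ S} = n := by
      rw [Fintype.card_coe, hScard]
    let g : Fin n ≃ {e // e ∈ S} := (Fintype.equivFinOfCardEq hcardcoe).symm
    -- reindex by permutations
    have hbij :
        ∑ σ : Equiv.Perm (Fin n), F (fun a => ((g (σ a) : E)))
        = ∑ p ∈ (Finset.univ.filter (fun p : Fin n → E => Function.Injective p)).filter
            (fun p => Finset.image p Finset.univ = S), F p := by
      refine Finset.sum_bij (fun σ _ => fun a => ((g (σ a) : E))) ?_ ?_ ?_ ?_
      · intro σ _
        have hinj : Function.Injective (fun a => ((g (σ a) : E))) :=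
          Subtype.val_injective.comp (g.injective.comp σ.injective)
        simp only [Finset.mem_filter, Finset.mem_univ, true_and]
        refine ⟨hinj, ?_⟩
        apply Finset.eq_of_subset_of_card_le
        · intro e he
          simp only [Finset.mem_image] at he
          obtain ⟨a, _, rfl⟩ := he
          exact (g (σ a)).2
        · rw [Finset.card_image_of_injective _ hinj, Finset.card_univ,
            Fintype.card_fin, hScard]
      · intro σ₁ _ σ₂ _ h
        apply Equiv.coe_fn_injective
        funext a
        have := congrFun h a
        exact (g.injective (Subtype.ext this))
      · intro p hp
        simp only [Finset.mem_filter, Finset.mem_univ, true_and] at hp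
        obtain ⟨hpinj, hpim⟩ := hp
        have hmem : ∀ a, p a ∈ S := by
          intro a
          rw [← hpim]
          exact Finset.mem_image_of_mem p (Finset.mem_univ a)
        have hinj2 : Function.Injective (fun a => g.symm ⟨p a, hmem a⟩) := by
          intro a₁ a₂ h
          have := g.symm.injective h
          exact hpinj (congrArg Subtype.val this)
        obtain ⟨hinj2', hsurj2⟩ := Finite.injective_iff_bijective.mp hinj2
        refine ⟨Equiv.ofBijective _ ⟨hinj2', hsurj2⟩, Finset.mem_univ _, ?_⟩
        funext a
        exact congrArg Subtype.val (g.apply_symm_apply _)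
      · intro σ _
        rfl
    rw [← hbij]
    -- compute the sum over permutations
    set C : Matrix (Fin n) (Fin n) ℝ :=
      Matrix.of (fun a b : Fin n => (κ a ((g b : E)) : ℝ)) with hC
    have hterm : ∀ σ : Equiv.Perm (Fin n),
        F (fun a => ((g (σ a) : E)))
        = (∏ i, x ((g i : E))) *
            ((((Equiv.Perm.sign σ : ℤ) : ℝ) * ∏ i, (κ i ((g (σ i) : E)) : ℝ)) *
              C.det) := by
      intro σ
      simp only [hF]
      have hx2 : (∏ i, x ((g (σ i) : E))) = ∏ i, x ((g i : E)) :=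
        Equiv.prod_comp σ (fun i => x ((g i : E)))

      have hdet : (Matrix.of fun a b : Fin n => (κ a ((g (σ b) : E)) : ℝ)).det
          = ((Equiv.Perm.sign σ : ℤ) : ℝ) * C.det := by
        have : (Matrix.of fun a b : Fin n => (κ a ((g (σ b) : E)) : ℝ))
            = C.submatrix id σ := by
          funext a b
          simp [hC, Matrix.submatrix_apply]
        rw [this, Matrix.det_permute']
      rw [hx2, hdet]
      ring
    rw [Finset.sum_congr rfl fun σ _ => hterm σ, ← Finset.mul_sum]
    have hsum : ∑ σ : Equiv.Perm (Fin n),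
        ((((Equiv.Perm.sign σ : ℤ) : ℝ) * ∏ i, (κ i ((g (σ i) : E)) : ℝ)) * C.det)
        = (∑ σ : Equiv.Perm (Fin n),
            ((Equiv.Perm.sign σ : ℤ) : ℝ) * ∏ i, (κ i ((g (σ i) : E)) : ℝ)) * C.det := by
      rw [Finset.sum_mul]
    have hdetD : ∑ σ : Equiv.Perm (Fin n),
        ((Equiv.Perm.sign σ : ℤ) : ℝ) * ∏ i, (κ i ((g (σ i) : E)) : ℝ) = C.det := by
      have h1 : (Matrix.of (fun a b : Fin n => (κ b ((g a : E)) : ℝ))).det = C.det := by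
        rw [← Matrix.det_transpose C]
        congr 1
      rw [← h1, Matrix.det_apply']
      rfl
    rw [hsum, hdetD]
    -- the integer determinant
    set Mz : Matrix (Fin n) (Fin n) ℤ :=
      Matrix.of (fun a b : Fin n => κ a ((g b : E))) with hMz
    have hcast : C.det = ((Mz.det : ℤ) : ℝ) := by
      have h := RingHom.map_det (Int.castRingHom ℝ) Mz
      have hC' : C = (Int.castRingHom ℝ).mapMatrix Mz := by ext a b; rfl
      rw [hC']; exact h.symm
    have hxprod : (∏ i, x ((g i : E))) = ∏ e ∈ S, x e := by
      rw [← Finset.prod_coe_sort S x]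
      exact Equiv.prod_comp g (fun e : {e // e ∈ S} => x e)
    rw [hcast, hxprod]
    by_cases hST : IsSpanningTree head tail S
    · have hunit := isUnit_det_of_spanning head tail hn κ hκ_indep hκ_span S hST g
      rcases Int.isUnit_iff.mp hunit with h | h
      · rw [if_pos hST, hMz] at *
        rw [h]; norm_num
      · rw [if_pos hST, hMz] at *
        rw [h]; norm_num
    · have hzero := det_eq_zero_of_not_spanning head tail hn κ hκ_span S hScard hST g
      rw [if_neg hST, hMz, hzero]
      norm_num
  -- Step 5: extend the sum to all subsets.
  have hext : ∑ S ∈ Finset.powersetCard n (Finset.univ : Finset E),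
      (if IsSpanningTree head tail S then ∏ e ∈ S, x e else 0)
      = ∑ T : Finset E, if IsSpanningTree head tail T then ∏ e ∈ T, x e else 0 := by
    apply Finset.sum_subset (Finset.subset_univ _)
    intro S _ hS
    rw [Finset.mem_powersetCard_univ] at hS
    have : ¬ IsSpanningTree head tail S := by
      intro h
      obtain ⟨h1, -⟩ := h
      omega
    rw [if_neg this]
  rw [expand, hsplit, hfiber]
  rw [Finset.sum_congr rfl hinner, hext]
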